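/- Let G_n (n ≥ 4) be the star graph with n−1 vertices with an extra edge attached at one leaf (so G_n has n vertices), and let X_n be the number of crossings of a uniformly random embedding of G_n. Then E[X_n] = (n−3)/3, E[X_n²] = (n−2)(n−3)/6, and Var(X_n) = n(n−3)/18. -/

import Mathlib

open Finset

namespace RandomCrossings

/-- `z` lies strictly between `x` and `y`. -/
def Btw {n : ℕ} (x y z : Fin n) : Prop := min x y < z ∧ z < max x y

instance {n : ℕ} (x y z : Fin n) : Decidable (Btw x y z) :=
  inferInstanceAs (Decidable (_ ∧ _))

/-- The pair of edges `s` forms a crossing under the embedding `π`: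
there is a labelling of `s` as `{{a,b},{c,d}}` such that exactly one of
`π c`, `π d` lies strictly between `π a` and `π b`. -/
def IsCrossing {n : ℕ} (π : Equiv.Perm (Fin n)) (s : Finset (Sym2 (Fin n))) : Prop :=
  ∃ a b c d : Fin n,
    s = {Sym2.mk a b, Sym2.mk c d} ∧
      Xor' (Btw (π a) (π b) (π c)) (Btw (π a) (π b) (π d))

instance {n : ℕ} (π : Equiv.Perm (Fin n)) (s : Finset (Sym2 (Fin n))) :
    Decidable (IsCrossing π s) :=
  by unfold IsCrossing Xor'; infer_instance

/-- The set of `r`-matchings of `G`: sets of `r` pairwise vertex-disjoint edges. -/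
def matchings {n : ℕ} (G : SimpleGraph (Fin n)) [DecidableRel G.Adj] (r : ℕ) :
    Finset (Finset (Sym2 (Fin n))) :=
  (G.edgeFinset.powersetCard r).filter
    (fun s => ∀ e ∈ s, ∀ f ∈ s, e ≠ f → ∀ v : Fin n, ¬(v ∈ e ∧ v ∈ f))

/-- `mMatch G r` is the number of `r`-matchings of `G`. -/
def mMatch {n : ℕ} (G : SimpleGraph (Fin n)) [DecidableRel G.Adj] (r : ℕ) : ℕ :=
  (matchings G r).card

/-- The number of crossings of the embedding of `G` given by the permutation `π`. -/
def crossingNumber {n : ℕ} (G : SimpleGraph (Fin n)) [DecidableRel G.Adj]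
    (π : Equiv.Perm (Fin n)) : ℕ :=
  ((matchings G 2).filter (fun s => IsCrossing π s)).card

/-- Probability of an event under a uniformly random permutation of `Fin n`. -/
noncomputable def prob {n : ℕ} (p : Equiv.Perm (Fin n) → Prop) : ℝ := by
  classical
  exact ((Finset.univ.filter p).card : ℝ) / (Fintype.card (Equiv.Perm (Fin n)) : ℝ)

/-- Expectation of a real random variable of a uniformly random permutation of `Fin n`. -/
noncomputable def expect {n : ℕ} (f : Equiv.Perm (Fin n) → ℝ) : ℝ :=
  (∑ π : Equiv.Perm (Fin n), f π) / (Fintype.card (Equiv.Perm (Fin n)) : ℝ)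

/-- The mean number of crossings of a uniformly random embedding of `G`. -/
noncomputable def meanX {n : ℕ} (G : SimpleGraph (Fin n)) [DecidableRel G.Adj] : ℝ :=
  expect (fun π => (crossingNumber G π : ℝ))

/-- The variance of the number of crossings of a uniformly random embedding of `G`. -/
noncomputable def varX {n : ℕ} (G : SimpleGraph (Fin n)) [DecidableRel G.Adj] : ℝ :=
  expect (fun π => ((crossingNumber G π : ℝ) - meanX G) ^ 2)

/-- The standard normal cumulative distribution function. -/
noncomputable def Phi (z : ℝ) : ℝ :=
  ((ProbabilityTheory.gaussianReal 0 1) (Set.Iic z)).toReal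

/-- Kolmogorov distance between a random variable of a uniform permutation and
a standard Gaussian. -/
noncomputable def dKol {n : ℕ} (W : Equiv.Perm (Fin n) → ℝ) : ℝ :=
  ⨆ z : ℝ, |prob (fun π => W π ≤ z) - Phi z|

/-- The star graph with center `0` joined to the leaves `1, …, n−2`, together with
one additional edge `{n−2, n−1}` attached at the leaf `n−2`. -/
def kite (n : ℕ) : SimpleGraph (Fin n) where
  Adj v w := v ≠ w ∧
    (((v : ℕ) = 0 ∧ 1 ≤ (w : ℕ) ∧ (w : ℕ) ≤ n - 2) ∨
     ((w : ℕ) = 0 ∧ 1 ≤ (v : ℕ) ∧ (v : ℕ) ≤ n - 2) ∨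
     ((v : ℕ) = n - 2 ∧ (w : ℕ) = n - 1) ∨
     ((w : ℕ) = n - 2 ∧ (v : ℕ) = n - 1))
  symm := ⟨fun v w h => ⟨h.1.symm, by rcases h with ⟨_, h⟩; tauto⟩⟩
  loopless := ⟨fun v h => h.1 rfl⟩

instance (n : ℕ) : DecidableRel (kite n).Adj :=
  fun _ _ => inferInstanceAs (Decidable (_ ∧ _))

set_option linter.unusedVariables false


/-- `z` strictly between `x` and `y` (ℕ version). -/
def NB (x y z : ℕ) : Prop := min x y < z ∧ z < max x y
instance (x y z : ℕ) : Decidable (NB x y z) := inferInstanceAs (Decidable (_∧_))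
def NG (a b c d : ℕ) : Prop := Xor' (NB a b c) (NB a b d)
instance (a b c d : ℕ) : Decidable (NG a b c d) := inferInstanceAs (Decidable (Xor _ _))
def NJ (a b c d e : ℕ) : Prop := NG a b d e ∧ NG a c d e
instance (a b c d e : ℕ) : Decidable (NJ a b c d e) := inferInstanceAs (Decidable (_∧_))

def EOne (a b c d e : ℕ) : Prop :=
    (NJ a b c d e ∧ ¬NJ a b d c e ∧ ¬NJ a b e c d ∧ ¬NJ a c d b e ∧ ¬NJ a c e b d ∧ ¬NJ a d e b c) ∨
    (¬NJ a b c d e ∧ NJ a b d c e ∧ ¬NJ a b e c d ∧ ¬NJ a c d b e ∧ ¬NJ a c e b d ∧ ¬NJ a d e b c) ∨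
    (¬NJ a b c d e ∧ ¬NJ a b d c e ∧ NJ a b e c d ∧ ¬NJ a c d b e ∧ ¬NJ a c e b d ∧ ¬NJ a d e b c) ∨
    (¬NJ a b c d e ∧ ¬NJ a b d c e ∧ ¬NJ a b e c d ∧ NJ a c d b e ∧ ¬NJ a c e b d ∧ ¬NJ a d e b c) ∨
    (¬NJ a b c d e ∧ ¬NJ a b d c e ∧ ¬NJ a b e c d ∧ ¬NJ a c d b e ∧ NJ a c e b d ∧ ¬NJ a d e b c) ∨
    (¬NJ a b c d e ∧ ¬NJ a b d c e ∧ ¬NJ a b e c d ∧ ¬NJ a c d b e ∧ ¬NJ a c e b d ∧ NJ a d e b c)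
instance (a b c d e : ℕ) : Decidable (EOne a b c d e) := by unfold EOne; infer_instance

set_option synthInstance.maxSize 2000 in
set_option synthInstance.maxHeartbeats 1000000 in
theorem master : ∀ u v w x y : Fin 5, u≠v→u≠w→u≠x→u≠y→v≠w→v≠x→v≠y→w≠x→w≠y→x≠y→
    EOne u.val v.val w.val x.val y.val := by decide

lemma NB_iff (x y z : ℕ) : NB x y z ↔ (x < z ∨ y < z) ∧ (z < x ∨ z < y) := by
  rw [NB, min_lt_iff, lt_max_iff]

lemma NB_congr {x y z x' y' z' : ℕ} (h1 : x < z ↔ x' < z') (h2 : y < z ↔ y' < z')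
    (h3 : z < x ↔ z' < x') (h4 : z < y ↔ z' < y') : NB x y z ↔ NB x' y' z' := by
  rw [NB_iff, NB_iff]; tauto

variable {S : Finset ℕ} {r : ℕ → ℕ}

lemma NG_congr (H : ∀ s ∈ S, ∀ t ∈ S, (s < t ↔ r s < r t)) {a b c d : ℕ} (ha : a ∈ S) (hb : b ∈ S) (hc : c ∈ S) (hd : d ∈ S) :
    NG a b c d ↔ NG (r a) (r b) (r c) (r d) := by
  unfold NG Xor'
  rw [NB_congr (H a ha c hc) (H b hb c hc) (H c hc a ha) (H c hc b hb),
     NB_congr (H a ha d hd) (H b hb d hd) (H d hd a ha) (H d hd b hb)]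

lemma NJ_congr (H : ∀ s ∈ S, ∀ t ∈ S, (s < t ↔ r s < r t)) {a b c d e : ℕ} (ha : a ∈ S) (hb : b ∈ S) (hc : c ∈ S) (hd : d ∈ S)
    (he : e ∈ S) : NJ a b c d e ↔ NJ (r a) (r b) (r c) (r d) (r e) := by
  unfold NJ
  rw [NG_congr H ha hb hd he, NG_congr H ha hc hd he]

lemma EOne_congr (H : ∀ s ∈ S, ∀ t ∈ S, (s < t ↔ r s < r t)) {a b c d e : ℕ} (ha : a ∈ S) (hb : b ∈ S) (hc : c ∈ S) (hd : d ∈ S)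
    (he : e ∈ S) : EOne a b c d e ↔ EOne (r a) (r b) (r c) (r d) (r e) := by
  unfold EOne
  rw [NJ_congr H ha hb hc hd he, NJ_congr H ha hb hd hc he, NJ_congr H ha hb he hc hd,
    NJ_congr H ha hc hd hb he, NJ_congr H ha hc he hb hd, NJ_congr H ha hd he hb hc]


/-- Exactly one of three rotations is a crossing (4 distinct values). -/
lemma xor3 {a b c d : ℕ} (h1 : a≠b) (h2 : a≠c) (h3 : a≠d) (h4 : b≠c) (h5 : b≠d) (h6 : c≠d) :
    (NG a b c d ∧ ¬NG a c d b ∧ ¬NG a d b c) ∨ (¬NG a b c d ∧ NG a c d b ∧ ¬NG a d b c)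
    ∨ (¬NG a b c d ∧ ¬NG a c d b ∧ NG a d b c) := by
  simp only [NG, NB, Xor', Xor]; omega

/-- Exactly one of six rearrangements is a double crossing (5 distinct values). -/
lemma xor6 {a b c d e : ℕ} (h1:a≠b) (h2:a≠c) (h3:a≠d) (h4:a≠e) (h5:b≠c) (h6:b≠d) (h7:b≠e)
    (h8:c≠d) (h9:c≠e) (h10:d≠e) : EOne a b c d e := by
  classical
  set S : Finset ℕ := {a,b,c,d,e} with hS
  have hcard : S.card ≤ 5 := by
    refine le_trans (Finset.card_insert_le _ _) ?_
    refine Nat.succ_le_succ (le_trans (Finset.card_insert_le _ _) ?_)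
    refine Nat.succ_le_succ (le_trans (Finset.card_insert_le _ _) ?_)
    refine Nat.succ_le_succ (le_trans (Finset.card_insert_le _ _) ?_)
    simp
  set r : ℕ → ℕ := fun t => (S.filter (· < t)).card with hr
  have hmono : ∀ s ∈ S, ∀ t ∈ S, s < t → r s < r t := by
    intro s hs t ht hst
    apply Finset.card_lt_card
    constructor
    · intro x hx
      simp only [Finset.mem_filter] at hx ⊢
      exact ⟨hx.1, lt_trans hx.2 hst⟩
    · intro hsub
      have : s ∈ S.filter (· < t) := by simp [Finset.mem_filter, hs, hst]
      have := hsub this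
      simp only [Finset.mem_filter] at this
      exact lt_irrefl s this.2
  have H : ∀ s ∈ S, ∀ t ∈ S, (s < t ↔ r s < r t) := by
    intro s hs t ht
    constructor
    · exact hmono s hs t ht
    · intro h
      rcases lt_trichotomy s t with h'|h'|h'
      · exact h'
      · subst h'; exact absurd h (lt_irrefl _)
      · exact absurd (hmono t ht s hs h') (by omega)
  have hbnd : ∀ t ∈ S, r t < 5 := by
    intro t ht
    have hsub : S.filter (· < t) ⊆ S.erase t := by
      intro x hx
      simp only [Finset.mem_filter] at hx
      exact Finset.mem_erase.mpr ⟨Nat.ne_of_lt hx.2, hx.1⟩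
    have := Finset.card_le_card hsub
    have h2 := Finset.card_erase_of_mem ht
    have h3 : 1 ≤ S.card := Finset.card_pos.mpr ⟨t, ht⟩
    simp only [hr]
    omega
  have ha : a ∈ S := by simp [hS]
  have hb : b ∈ S := by simp [hS]
  have hc : c ∈ S := by simp [hS]
  have hd : d ∈ S := by simp [hS]
  have he : e ∈ S := by simp [hS]
  have hne : ∀ s ∈ S, ∀ t ∈ S, s ≠ t → r s ≠ r t := by
    intro s hs t ht hst
    rcases lt_or_gt_of_ne hst with h'|h'
    · exact Nat.ne_of_lt (hmono s hs t ht h')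
    · exact (Nat.ne_of_lt (hmono t ht s hs h')).symm
  rw [EOne_congr H ha hb hc hd he]
  have := master ⟨r a, hbnd a ha⟩ ⟨r b, hbnd b hb⟩ ⟨r c, hbnd c hc⟩ ⟨r d, hbnd d hd⟩
      ⟨r e, hbnd e he⟩
  simp only [ne_eq, Fin.mk.injEq] at this
  exact this (hne a ha b hb h1) (hne a ha c hc h2) (hne a ha d hd h3) (hne a ha e he h4)
    (hne b hb c hc h5) (hne b hb d hd h6) (hne b hb e he h7) (hne c hc d hd h8)
    (hne c hc e he h9) (hne d hd e he h10)


-- symmetry helpers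
lemma NG_ba {a b c d : ℕ} : NG a b c d ↔ NG b a c d := by
  simp [NG, NB, min_comm, max_comm]
lemma NG_abdc {a b c d : ℕ} : NG a b c d ↔ NG a b d c := by
  unfold NG Xor' Xor; tauto
lemma NG_cdab {a b c d : ℕ} (h1 : a≠b) (h2 : a≠c) (h3 : a≠d) (h4 : b≠c) (h5 : b≠d)
    (h6 : c≠d) : NG a b c d ↔ NG c d a b := by
  simp only [NG, NB, Xor', Xor]; omega

-- bridge
lemma btw_iff {n : ℕ} (x y w : Fin n) : Btw x y w ↔ NB x.val y.val w.val := Iff.rfl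

lemma pair_eq {α : Type*} [DecidableEq α] {a b c d : α} (h : ({a,b} : Finset α) = {c,d}) :
    a = c ∧ b = d ∨ a = d ∧ b = c := by
  have ha : a ∈ ({c,d}:Finset α) := h ▸ (by simp)
  have hb : b ∈ ({c,d}:Finset α) := h ▸ (by simp)
  have hc : c ∈ ({a,b}:Finset α) := h ▸ (by simp)
  have hd : d ∈ ({a,b}:Finset α) := h ▸ (by simp)
  simp only [Finset.mem_insert, Finset.mem_singleton] at ha hb hc hd
  rcases ha with rfl|rfl <;> rcases hb with rfl|rfl <;> tauto

lemma cross_iff {n : ℕ} (π : Equiv.Perm (Fin n)) {z i p q : Fin n}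
    (hzi : z ≠ i) (hzp : z ≠ p) (hzq : z ≠ q) (hip : i ≠ p) (hiq : i ≠ q) (hpq : p ≠ q) :
    IsCrossing π {Sym2.mk z i, Sym2.mk p q} ↔
      NG (π z).val (π i).val (π p).val (π q).val := by
  have vne : ∀ {u v : Fin n}, u ≠ v → (π u).val ≠ (π v).val := by
    intro u v h hc
    exact h (π.injective (Fin.ext hc))
  have d1 := vne hzi; have d2 := vne hzp; have d3 := vne hzq
  have d4 := vne hip; have d5 := vne hiq; have d6 := vne hpq
  constructor
  · rintro ⟨a,b,c,d, hs, hx⟩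
    have hx' : NG (π a).val (π b).val (π c).val (π d).val := hx
    clear hx
    obtain ⟨h1, h2⟩ | ⟨h1, h2⟩ := pair_eq hs.symm <;>
      rw [Sym2.eq, Sym2.rel_iff'] at h1 h2 <;>
      simp only [Prod.mk.injEq, Prod.swap_prod_mk] at h1 h2 <;>
      obtain ⟨rfl,rfl⟩|⟨rfl,rfl⟩ := h1 <;> obtain ⟨rfl,rfl⟩|⟨rfl,rfl⟩ := h2
    · exact hx'
    · exact NG_abdc.mp hx'
    · exact NG_ba.mp hx'
    · exact NG_ba.mp (NG_abdc.mp hx')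
    · exact (NG_cdab d6 d2.symm d4.symm d3.symm d5.symm d1).mp hx'
    · exact NG_ba.mpr ((NG_cdab d6 d4.symm d2.symm d5.symm d3.symm d1.symm).mp hx')
    · exact NG_abdc.mpr ((NG_cdab d6.symm d3.symm d5.symm d2.symm d4.symm d1).mp hx')
    · exact NG_ba.mpr (NG_abdc.mpr ((NG_cdab d6.symm d5.symm d3.symm d4.symm d2.symm d1.symm).mp hx'))
  · intro h
    exact ⟨z, i, p, q, rfl, h⟩

-- reindexing
lemma card_filter_mul {n : ℕ} (P : Equiv.Perm (Fin n) → Prop) [DecidablePred P]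
    (g : Equiv.Perm (Fin n)) :
    (univ.filter fun π => P (π * g)).card = (univ.filter P).card := by
  apply Finset.card_bij' (fun π _ => π * g) (fun π _ => π * g⁻¹)
  · intro a ha
    simp only [Finset.mem_filter, Finset.mem_univ, true_and] at ha ⊢
    exact ha
  · intro a ha
    simp only [Finset.mem_filter, Finset.mem_univ, true_and] at ha ⊢
    simpa [mul_assoc] using ha
  · intro a _; simp [mul_assoc]
  · intro a _; simp [mul_assoc]


lemma count_single {n : ℕ} {z i p q : Fin n}
    (hzi : z ≠ i) (hzp : z ≠ p) (hzq : z ≠ q) (hip : i ≠ p) (hiq : i ≠ q) (hpq : p ≠ q) :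
    3 * (univ.filter fun π : Equiv.Perm (Fin n) =>
        IsCrossing π {Sym2.mk z i, Sym2.mk p q}).card
      = Fintype.card (Equiv.Perm (Fin n)) := by
  have hfilter : (univ.filter fun π : Equiv.Perm (Fin n) =>
      IsCrossing π {Sym2.mk z i, Sym2.mk p q}) =
      univ.filter (fun π => NG (π z).val (π i).val (π p).val (π q).val) :=
    Finset.filter_congr (fun π _ => cross_iff π hzi hzp hzq hip hiq hpq)
  rw [hfilter]
  set Q : Equiv.Perm (Fin n) → Prop :=
    fun π => NG (π z).val (π i).val (π p).val (π q).val with hQ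
  set c : Equiv.Perm (Fin n) := Equiv.swap i p * Equiv.swap p q with hc
  have hcz : c z = z := by
    rw [hc, Equiv.Perm.mul_apply, Equiv.swap_apply_of_ne_of_ne hzp hzq,
      Equiv.swap_apply_of_ne_of_ne hzi hzp]
  have hci : c i = p := by
    rw [hc, Equiv.Perm.mul_apply, Equiv.swap_apply_of_ne_of_ne hip hiq,
      Equiv.swap_apply_left]
  have hcp : c p = q := by
    rw [hc, Equiv.Perm.mul_apply, Equiv.swap_apply_left,
      Equiv.swap_apply_of_ne_of_ne hiq.symm hpq.symm]
  have hcq : c q = i := by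
    rw [hc, Equiv.Perm.mul_apply, Equiv.swap_apply_right, Equiv.swap_apply_right]
  have key : ∀ π : Equiv.Perm (Fin n),
      ((if Q π then 1 else 0) + ((if Q (π * c) then 1 else 0)
        + (if Q (π * (c * c)) then 1 else 0)) : ℕ) = 1 := by
    intro π
    have vne : ∀ {u v : Fin n}, u ≠ v → (π u).val ≠ (π v).val := by
      intro u v h hcon
      exact h (π.injective (Fin.ext hcon))
    have e1 : Q (π * c) ↔ NG (π z).val (π p).val (π q).val (π i).val := by
      simp only [hQ, Equiv.Perm.mul_apply, hcz, hci, hcp, hcq]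
    have e2 : Q (π * (c * c)) ↔ NG (π z).val (π q).val (π i).val (π p).val := by
      simp only [hQ, Equiv.Perm.mul_apply, hcz, hci, hcp, hcq]
    rcases xor3 (vne hzi) (vne hzp) (vne hzq) (vne hip) (vne hiq) (vne hpq) with
      ⟨ha, hb, hc'⟩|⟨ha, hb, hc'⟩|⟨ha, hb, hc'⟩ <;>
      · simp only [e1, e2, hQ]
        simp [ha, hb, hc', hcz, hci, hcp, hcq, Equiv.Perm.mul_apply]
  have hsum : ∀ g : Equiv.Perm (Fin n),
      (∑ π : Equiv.Perm (Fin n), if Q (π * g) then 1 else 0) = (univ.filter Q).card := by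
    intro g
    rw [← Finset.card_filter]
    exact card_filter_mul Q g
  symm
  calc Fintype.card (Equiv.Perm (Fin n))
      = ∑ π : Equiv.Perm (Fin n), 1 := by
        rw [Finset.sum_const, smul_eq_mul, mul_one, Finset.card_univ]
    _ = ∑ π : Equiv.Perm (Fin n), ((if Q π then 1 else 0) + ((if Q (π * c) then 1 else 0)
          + (if Q (π * (c * c)) then 1 else 0))) :=
        Finset.sum_congr rfl fun π _ => (key π).symm
    _ = (∑ π : Equiv.Perm (Fin n), if Q π then 1 else 0)
        + ((∑ π : Equiv.Perm (Fin n), if Q (π * c) then 1 else 0)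
          + (∑ π : Equiv.Perm (Fin n), if Q (π * (c * c)) then 1 else 0)) := by
        rw [Finset.sum_add_distrib, Finset.sum_add_distrib]
    _ = 3 * (univ.filter Q).card := by
        rw [← Finset.card_filter, hsum, hsum]; ring



lemma count_pair {n : ℕ} {z i j p q : Fin n}
    (h1 : z ≠ i) (h2 : z ≠ j) (h3 : z ≠ p) (h4 : z ≠ q) (h5 : i ≠ j) (h6 : i ≠ p)
    (h7 : i ≠ q) (h8 : j ≠ p) (h9 : j ≠ q) (h10 : p ≠ q) :
    6 * (univ.filter fun π : Equiv.Perm (Fin n) =>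
        IsCrossing π {Sym2.mk z i, Sym2.mk p q} ∧
        IsCrossing π {Sym2.mk z j, Sym2.mk p q}).card
      = Fintype.card (Equiv.Perm (Fin n)) := by
  have hfilter : (univ.filter fun π : Equiv.Perm (Fin n) =>
      IsCrossing π {Sym2.mk z i, Sym2.mk p q} ∧
      IsCrossing π {Sym2.mk z j, Sym2.mk p q}) =
      univ.filter (fun π => NJ (π z).val (π i).val (π j).val (π p).val (π q).val) := by
    refine Finset.filter_congr (fun π _ => ?_)
    rw [cross_iff π h1 h3 h4 h6 h7 h10, cross_iff π h2 h3 h4 h8 h9 h10]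
    exact Iff.rfl
  rw [hfilter]
  set Q : Equiv.Perm (Fin n) → Prop :=
    fun π => NJ (π z).val (π i).val (π j).val (π p).val (π q).val with hQ
  set g2 : Equiv.Perm (Fin n) := Equiv.swap j p with hg2
  set g3 : Equiv.Perm (Fin n) := Equiv.swap p q * Equiv.swap j p with hg3
  set g4 : Equiv.Perm (Fin n) := Equiv.swap i j * Equiv.swap j p with hg4
  set g5 : Equiv.Perm (Fin n) := Equiv.swap i j * (Equiv.swap j q * Equiv.swap q p) with hg5
  set g6 : Equiv.Perm (Fin n) := Equiv.swap i p * Equiv.swap j q with hg6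
  have sw : ∀ (a b x : Fin n), x ≠ a → x ≠ b → Equiv.swap a b x = x := fun a b x ha hb =>
    Equiv.swap_apply_of_ne_of_ne ha hb
  have e2 : ∀ π : Equiv.Perm (Fin n), Q (π * g2) ↔
      NJ (π z).val (π i).val (π p).val (π j).val (π q).val := by
    intro π
    simp only [hQ, hg2, Equiv.Perm.mul_apply, sw _ _ z h2 h3, sw _ _ i h5 h6,
      sw _ _ q h9.symm h10.symm, Equiv.swap_apply_left, Equiv.swap_apply_right]
  have e3 : ∀ π : Equiv.Perm (Fin n), Q (π * g3) ↔
      NJ (π z).val (π i).val (π q).val (π j).val (π p).val := by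
    intro π
    simp only [hQ, hg3, Equiv.Perm.mul_apply, sw _ _ z h2 h3, sw _ _ z h3 h4,
      sw _ _ i h5 h6, sw _ _ i h6 h7, sw _ _ j h8 h9, sw _ _ q h9.symm h10.symm,
      Equiv.swap_apply_left, Equiv.swap_apply_right]
  have e4 : ∀ π : Equiv.Perm (Fin n), Q (π * g4) ↔
      NJ (π z).val (π j).val (π p).val (π i).val (π q).val := by
    intro π
    simp only [hQ, hg4, Equiv.Perm.mul_apply, sw _ _ z h2 h3, sw _ _ z h1 h2,
      sw _ _ i h5 h6, sw _ _ p h6.symm h8.symm, sw _ _ q h9.symm h10.symm,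
      sw _ _ q h7.symm h9.symm, Equiv.swap_apply_left, Equiv.swap_apply_right]
  have e5 : ∀ π : Equiv.Perm (Fin n), Q (π * g5) ↔
      NJ (π z).val (π j).val (π q).val (π i).val (π p).val := by
    intro π
    simp only [hQ, hg5, Equiv.Perm.mul_apply, sw _ _ z h4 h3, sw _ _ z h2 h4,
      sw _ _ z h1 h2, sw _ _ i h7 h6, sw _ _ i h5 h7, sw _ _ j h9 h8,
      sw _ _ q h7.symm h9.symm, sw _ _ p h8.symm h10, sw _ _ p h6.symm h8.symm,
      Equiv.swap_apply_left, Equiv.swap_apply_right]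
  have e6 : ∀ π : Equiv.Perm (Fin n), Q (π * g6) ↔
      NJ (π z).val (π p).val (π q).val (π i).val (π j).val := by
    intro π
    simp only [hQ, hg6, Equiv.Perm.mul_apply, sw _ _ z h2 h4, sw _ _ z h1 h3,
      sw _ _ i h5 h7, sw _ _ q h7.symm h10.symm, sw _ _ p h8.symm h10,
      sw _ _ j h5.symm h8, Equiv.swap_apply_left, Equiv.swap_apply_right]
  have key : ∀ π : Equiv.Perm (Fin n),
      ((if Q π then 1 else 0) + ((if Q (π * g2) then 1 else 0)
        + ((if Q (π * g3) then 1 else 0) + ((if Q (π * g4) then 1 else 0)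
        + ((if Q (π * g5) then 1 else 0) + (if Q (π * g6) then 1 else 0))))) : ℕ) = 1 := by
    intro π
    have vne : ∀ {u v : Fin n}, u ≠ v → (π u).val ≠ (π v).val := by
      intro u v h hcon
      exact h (π.injective (Fin.ext hcon))
    have := xor6 (vne h1) (vne h2) (vne h3) (vne h4) (vne h5) (vne h6) (vne h7) (vne h8)
      (vne h9) (vne h10)
    unfold EOne at this
    rcases this with ⟨k1,k2,k3,k4,k5,k6⟩|⟨k1,k2,k3,k4,k5,k6⟩|⟨k1,k2,k3,k4,k5,k6⟩|
      ⟨k1,k2,k3,k4,k5,k6⟩|⟨k1,k2,k3,k4,k5,k6⟩|⟨k1,k2,k3,k4,k5,k6⟩ <;>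
      · simp only [e2, e3, e4, e5, e6]
        simp only [hQ]
        simp [k1, k2, k3, k4, k5, k6]
  have hsum : ∀ g : Equiv.Perm (Fin n),
      (∑ π : Equiv.Perm (Fin n), if Q (π * g) then 1 else 0) = (univ.filter Q).card := by
    intro g
    rw [← Finset.card_filter]
    exact card_filter_mul Q g
  symm
  calc Fintype.card (Equiv.Perm (Fin n))
      = ∑ π : Equiv.Perm (Fin n), 1 := by
        rw [Finset.sum_const, smul_eq_mul, mul_one, Finset.card_univ]
    _ = ∑ π : Equiv.Perm (Fin n), ((if Q π then 1 else 0) + ((if Q (π * g2) then 1 else 0)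
        + ((if Q (π * g3) then 1 else 0) + ((if Q (π * g4) then 1 else 0)
        + ((if Q (π * g5) then 1 else 0) + (if Q (π * g6) then 1 else 0)))))) :=
        Finset.sum_congr rfl fun π _ => (key π).symm
    _ = (∑ π : Equiv.Perm (Fin n), if Q π then 1 else 0)
        + ((∑ π : Equiv.Perm (Fin n), if Q (π * g2) then 1 else 0)
        + ((∑ π : Equiv.Perm (Fin n), if Q (π * g3) then 1 else 0)
        + ((∑ π : Equiv.Perm (Fin n), if Q (π * g4) then 1 else 0)
        + ((∑ π : Equiv.Perm (Fin n), if Q (π * g5) then 1 else 0)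
        + (∑ π : Equiv.Perm (Fin n), if Q (π * g6) then 1 else 0))))) := by
        rw [Finset.sum_add_distrib, Finset.sum_add_distrib, Finset.sum_add_distrib,
          Finset.sum_add_distrib, Finset.sum_add_distrib]
    _ = 6 * (univ.filter Q).card := by
        rw [← Finset.card_filter, hsum, hsum, hsum, hsum, hsum]; ring



lemma ite_mul_ite (P Q : Prop) [Decidable P] [Decidable Q] :
    (if P then (1:ℕ) else 0) * (if Q then (1:ℕ) else 0) = (if P ∧ Q then (1:ℕ) else 0) := by
  by_cases hP : P <;> by_cases hQ : Q <;> simp [hP, hQ]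

lemma kite_edge {n : ℕ} {z p q : Fin n} (hz : z.val = 0) (hp : p.val = n-2)
    (hq : q.val = n-1) {x : Sym2 (Fin n)} (hx : x ∈ (kite n).edgeFinset) :
    (∃ w : Fin n, 1 ≤ w.val ∧ w.val ≤ n - 2 ∧ x = Sym2.mk z w) ∨ x = Sym2.mk p q := by
  rw [SimpleGraph.mem_edgeFinset] at hx
  induction x using Sym2.ind with
  | _ u v =>
    rw [SimpleGraph.mem_edgeSet] at hx
    obtain ⟨hne, hcase⟩ : _ ∧ _ := hx
    rcases hcase with ⟨hu0, hv1, hv2⟩ | ⟨hv0, hu1, hu2⟩ | ⟨hu, hv⟩ | ⟨hv, hu⟩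
    · left
      refine ⟨v, hv1, hv2, ?_⟩
      have : u = z := Fin.ext (by rw [hu0, hz])
      rw [this]
    · left
      refine ⟨u, hu1, hu2, ?_⟩
      have : v = z := Fin.ext (by rw [hv0, hz])
      rw [this, Sym2.eq_swap]
    · right
      have h1 : u = p := Fin.ext (by rw [hu, hp])
      have h2 : v = q := Fin.ext (by rw [hv, hq])
      rw [h1, h2]
    · right
      have h1 : v = p := Fin.ext (by rw [hv, hp])
      have h2 : u = q := Fin.ext (by rw [hu, hq])
      rw [h1, h2, Sym2.eq_swap]

lemma kite_matchings {n : ℕ} (hn : 4 ≤ n) {z p q : Fin n} (hz : z.val = 0)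
    (hp : p.val = n-2) (hq : q.val = n-1) :
    matchings (kite n) 2 =
      (univ.filter fun w : Fin n => 1 ≤ w.val ∧ w.val ≤ n - 3).image
        (fun w => ({Sym2.mk z w, Sym2.mk p q} : Finset (Sym2 (Fin n)))) := by
  ext s
  constructor
  · intro hs
    rw [matchings, Finset.mem_filter, Finset.mem_powersetCard] at hs
    obtain ⟨⟨hsub, hcard⟩, hdisj⟩ := hs
    obtain ⟨e, f, hef, rfl⟩ := Finset.card_eq_two.mp hcard
    have he := kite_edge hz hp hq (hsub (Finset.mem_insert_self e {f}))
    have hf := kite_edge hz hp hq (hsub (Finset.mem_insert_of_mem (Finset.mem_singleton_self f)))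
    rcases he with ⟨w1, hw11, hw12, rfl⟩ | rfl <;>
      rcases hf with ⟨w2, hw21, hw22, rfl⟩ | rfl
    · exfalso
      exact hdisj _ (Finset.mem_insert_self _ _) _ (by simp) hef z
        ⟨by rw [Sym2.mem_iff]; left; rfl, by rw [Sym2.mem_iff]; left; rfl⟩
    · rw [Finset.mem_image]
      have hw1p : w1.val ≠ n - 2 := by
        intro hcon
        have hw1 : w1 = p := Fin.ext (by rw [hcon, hp])
        exact hdisj _ (Finset.mem_insert_self _ _) _ (by simp) hef p
          ⟨by rw [Sym2.mem_iff]; right; exact hw1.symm, by rw [Sym2.mem_iff]; left; rfl⟩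
      refine ⟨w1, ?_, rfl⟩
      simp only [Finset.mem_filter, Finset.mem_univ, true_and]
      exact ⟨hw11, by omega⟩
    · rw [Finset.mem_image]
      have hw2p : w2.val ≠ n - 2 := by
        intro hcon
        have hw2' : w2 = p := Fin.ext (by rw [hcon, hp])
        exact hdisj _ (Finset.mem_insert_self _ _) _ (by simp) hef p
          ⟨by rw [Sym2.mem_iff]; left; rfl, by rw [Sym2.mem_iff]; right; exact hw2'.symm⟩
      refine ⟨w2, ?_, by rw [Finset.pair_comm]⟩
      simp only [Finset.mem_filter, Finset.mem_univ, true_and]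
      exact ⟨hw21, by omega⟩
    · exact absurd rfl hef
  · intro hs
    obtain ⟨w, hwI, rfl⟩ := Finset.mem_image.mp hs
    simp only [Finset.mem_filter, Finset.mem_univ, true_and] at hwI
    obtain ⟨hw1, hw2⟩ := hwI
    have hzw : z ≠ w := fun h => by have := congrArg Fin.val h; omega
    have hzp : z ≠ p := fun h => by have := congrArg Fin.val h; omega
    have hzq : z ≠ q := fun h => by have := congrArg Fin.val h; omega
    have hwp : w ≠ p := fun h => by have := congrArg Fin.val h; omega
    have hwq : w ≠ q := fun h => by have := congrArg Fin.val h; omega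
    have hpq : p ≠ q := fun h => by have := congrArg Fin.val h; omega
    have hEne : Sym2.mk z w ≠ Sym2.mk p q := by
      intro h
      rw [Sym2.eq, Sym2.rel_iff'] at h
      simp only [Prod.mk.injEq, Prod.swap_prod_mk] at h
      rcases h with ⟨h, -⟩ | ⟨h, -⟩
      · exact hzp h
      · exact hzq h
    rw [matchings, Finset.mem_filter, Finset.mem_powersetCard]
    refine ⟨⟨?_, ?_⟩, ?_⟩
    · intro x hx
      rcases Finset.mem_insert.mp hx with rfl | hx'
      · rw [SimpleGraph.mem_edgeFinset, SimpleGraph.mem_edgeSet]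
        exact ⟨hzw, Or.inl ⟨hz, hw1, by omega⟩⟩
      · rw [Finset.mem_singleton] at hx'
        subst hx'
        rw [SimpleGraph.mem_edgeFinset, SimpleGraph.mem_edgeSet]
        exact ⟨hpq, Or.inr (Or.inr (Or.inl ⟨hp, hq⟩))⟩
    · rw [Finset.card_insert_of_notMem (by simpa using hEne), Finset.card_singleton]
    · intro e he f hf hef v hv
      rcases Finset.mem_insert.mp he with rfl | he' <;>
        rcases Finset.mem_insert.mp hf with rfl | hf'
      · exact hef rfl
      · rw [Finset.mem_singleton] at hf'
        subst hf'
        obtain ⟨hv1, hv2⟩ := hv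
        rw [Sym2.mem_iff] at hv1 hv2
        rcases hv1 with rfl | rfl <;> rcases hv2 with h | h <;>
          · have := congrArg Fin.val h; omega
      · rw [Finset.mem_singleton] at he'
        subst he'
        obtain ⟨hv1, hv2⟩ := hv
        rw [Sym2.mem_iff] at hv1 hv2
        rcases hv2 with rfl | rfl <;> rcases hv1 with h | h <;>
          · have := congrArg Fin.val h; omega
      · rw [Finset.mem_singleton] at he' hf'
        subst he'; subst hf'
        exact hef rfl

lemma varX_eq {n : ℕ} (G : SimpleGraph (Fin n)) [DecidableRel G.Adj] :
    varX G = expect (fun π => (crossingNumber G π : ℝ) ^ 2) - (meanX G) ^ 2 := by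
  have hKpos : (0:ℝ) < (Fintype.card (Equiv.Perm (Fin n)) : ℝ) := by
    exact_mod_cast Fintype.card_pos
  have hK : (Fintype.card (Equiv.Perm (Fin n)) : ℝ) ≠ 0 := ne_of_gt hKpos
  unfold varX meanX expect
  set N := (Fintype.card (Equiv.Perm (Fin n)) : ℝ)
  set T := ∑ π : Equiv.Perm (Fin n), (crossingNumber G π : ℝ) with hT
  have expand : ∀ π : Equiv.Perm (Fin n),
      ((crossingNumber G π : ℝ) - T / N) ^ 2
        = (crossingNumber G π : ℝ)^2 - 2 * (T/N) * (crossingNumber G π : ℝ) + (T/N)^2 := by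
    intro π; ring
  rw [Finset.sum_congr rfl (fun π _ => expand π)]
  rw [Finset.sum_add_distrib, Finset.sum_sub_distrib, ← Finset.mul_sum, ← hT,
    Finset.sum_const, Finset.card_univ, nsmul_eq_mul]
  field_simp
  ring


/-- Mean, second moment and variance of the number of crossings of a random
embedding of the star-with-a-tail graph `G_n`. -/
theorem moments_crossings_kite (n : ℕ) (hn : 4 ≤ n) :
    meanX (kite n) = ((n : ℝ) - 3) / 3 ∧
    expect (fun π => (crossingNumber (kite n) π : ℝ) ^ 2) =
      ((n : ℝ) - 2) * ((n : ℝ) - 3) / 6 ∧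
    varX (kite n) = (n : ℝ) * ((n : ℝ) - 3) / 18 := by
  classical
  set z : Fin n := ⟨0, by omega⟩ with hzdef
  set p : Fin n := ⟨n-2, by omega⟩ with hpdef
  set q : Fin n := ⟨n-1, by omega⟩ with hqdef
  have hz : z.val = 0 := rfl
  have hp : p.val = n - 2 := rfl
  have hq : q.val = n - 1 := rfl
  set I : Finset (Fin n) := univ.filter (fun w => 1 ≤ w.val ∧ w.val ≤ n - 3) with hIdef
  set F : Fin n → Finset (Sym2 (Fin n)) := fun w => {Sym2.mk z w, Sym2.mk p q} with hFdef
  have hFw : ∀ w : Fin n, F w = {Sym2.mk z w, Sym2.mk p q} := fun w => rfl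
  have hmatch : matchings (kite n) 2 = I.image F := kite_matchings hn hz hp hq
  have hwmem : ∀ w ∈ I, 1 ≤ w.val ∧ w.val ≤ n - 3 := by
    intro w hw
    simpa [hIdef] using hw
  have hIcard : I.card = n - 3 := by
    have hb : I.card = (Finset.Icc 1 (n-3)).card := by
      refine Finset.card_bij (fun w _ => w.val) ?_ ?_ ?_
      · intro w hw
        obtain ⟨h1, h2⟩ := hwmem w hw
        exact Finset.mem_Icc.mpr ⟨h1, h2⟩
      · intro w hw w' hw' h
        exact Fin.ext h
      · intro m hm
        rw [Finset.mem_Icc] at hm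
        refine ⟨⟨m, by omega⟩, ?_, rfl⟩
        simp only [hIdef, Finset.mem_filter, Finset.mem_univ, true_and]
        exact hm
    rw [hb, Nat.card_Icc]
    omega
  have hinj : ∀ w ∈ I, ∀ w' ∈ I, F w = F w' → w = w' := by
    intro w hw w' hw' h
    obtain ⟨ha1, ha2⟩ := hwmem w hw
    obtain ⟨hb1, hb2⟩ := hwmem w' hw'
    have hmem : Sym2.mk z w ∈ F w' := by
      rw [← h, hFw]
      exact Finset.mem_insert_self _ _
    rw [hFw] at hmem
    rcases Finset.mem_insert.mp hmem with h1 | h1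
    · rw [Sym2.eq, Sym2.rel_iff'] at h1
      simp only [Prod.mk.injEq, Prod.swap_prod_mk] at h1
      rcases h1 with ⟨-, h1⟩ | ⟨h1, -⟩
      · exact h1
      · exfalso
        have := congrArg Fin.val h1
        omega
    · exfalso
      rw [Finset.mem_singleton, Sym2.eq, Sym2.rel_iff'] at h1
      simp only [Prod.mk.injEq, Prod.swap_prod_mk] at h1
      rcases h1 with ⟨h1, -⟩ | ⟨h1, -⟩ <;>
        · have := congrArg Fin.val h1
          omega
  have hdist : ∀ w ∈ I, z ≠ w ∧ z ≠ p ∧ z ≠ q ∧ w ≠ p ∧ w ≠ q ∧ p ≠ q := by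
    intro w hw
    obtain ⟨h1, h2⟩ := hwmem w hw
    refine ⟨?_, ?_, ?_, ?_, ?_, ?_⟩ <;>
      · intro h
        have := congrArg Fin.val h
        omega
  set K := Fintype.card (Equiv.Perm (Fin n)) with hKdef
  have hsingle : ∀ w ∈ I,
      3 * (univ.filter fun π : Equiv.Perm (Fin n) => IsCrossing π (F w)).card = K := by
    intro w hw
    obtain ⟨d1, d2, d3, d4, d5, d6⟩ := hdist w hw
    rw [hFw]
    exact count_single d1 d2 d3 d4 d5 d6
  have hpairc : ∀ w ∈ I, ∀ w' ∈ I, w ≠ w' →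
      6 * (univ.filter fun π : Equiv.Perm (Fin n) =>
        IsCrossing π (F w) ∧ IsCrossing π (F w')).card = K := by
    intro w hw w' hw' hww
    obtain ⟨d1, d2, d3, d4, d5, d6⟩ := hdist w hw
    obtain ⟨e1, e2, e3, e4, e5, e6⟩ := hdist w' hw'
    rw [hFw, hFw]
    exact count_pair d1 e1 d2 d3 hww d4 d5 e4 e5 d6
  have hX : ∀ π : Equiv.Perm (Fin n), crossingNumber (kite n) π
      = ∑ w ∈ I, (if IsCrossing π (F w) then 1 else 0) := by
    intro π
    rw [crossingNumber, hmatch, Finset.card_filter, Finset.sum_image hinj]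
  have hS1 : 3 * ∑ π : Equiv.Perm (Fin n), crossingNumber (kite n) π = (n - 3) * K := by
    calc 3 * ∑ π : Equiv.Perm (Fin n), crossingNumber (kite n) π
        = 3 * ∑ π : Equiv.Perm (Fin n), ∑ w ∈ I, (if IsCrossing π (F w) then 1 else 0) := by
          rw [Finset.sum_congr rfl (fun π _ => hX π)]
      _ = ∑ w ∈ I, 3 * ∑ π : Equiv.Perm (Fin n), (if IsCrossing π (F w) then 1 else 0) := by
          rw [Finset.sum_comm, Finset.mul_sum]
      _ = ∑ w ∈ I, K := Finset.sum_congr rfl (fun w hw => by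
          rw [← Finset.card_filter]
          exact hsingle w hw)
      _ = (n - 3) * K := by rw [Finset.sum_const, hIcard, smul_eq_mul]
  have hS2 : 6 * ∑ π : Equiv.Perm (Fin n),
      crossingNumber (kite n) π * crossingNumber (kite n) π
      = (n - 3) * (2 * K + (n - 4) * K) := by
    calc 6 * ∑ π : Equiv.Perm (Fin n),
        crossingNumber (kite n) π * crossingNumber (kite n) π
        = 6 * ∑ π : Equiv.Perm (Fin n), ∑ w ∈ I, ∑ w' ∈ I,
            (if IsCrossing π (F w) ∧ IsCrossing π (F w') then 1 else 0) := by
          refine congrArg (6 * ·) (Finset.sum_congr rfl fun π _ => ?_)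
          rw [hX π, Finset.sum_mul_sum]
          exact Finset.sum_congr rfl fun w _ => Finset.sum_congr rfl fun w' _ =>
            ite_mul_ite _ _
      _ = 6 * ∑ w ∈ I, ∑ w' ∈ I, ∑ π : Equiv.Perm (Fin n),
            (if IsCrossing π (F w) ∧ IsCrossing π (F w') then 1 else 0) := by
          rw [Finset.sum_comm]
          exact congrArg (6 * ·) (Finset.sum_congr rfl fun w _ => Finset.sum_comm)
      _ = ∑ w ∈ I, 6 * ∑ w' ∈ I, ∑ π : Equiv.Perm (Fin n),
            (if IsCrossing π (F w) ∧ IsCrossing π (F w') then 1 else 0) := by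
          rw [Finset.mul_sum]
      _ = ∑ w ∈ I, (2 * K + (n - 4) * K) := Finset.sum_congr rfl (fun w hw => by
          rw [← Finset.add_sum_erase _ _ hw, mul_add]
          congr 1
          · have hdiag : ∑ π : Equiv.Perm (Fin n),
                (if IsCrossing π (F w) ∧ IsCrossing π (F w) then 1 else 0)
                = ∑ π : Equiv.Perm (Fin n), (if IsCrossing π (F w) then 1 else 0) :=
              Finset.sum_congr rfl fun π _ => by simp [and_self]
            rw [hdiag, ← Finset.card_filter, show (6:ℕ) = 2 * 3 from rfl, mul_assoc,
              hsingle w hw]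
          · rw [Finset.mul_sum]
            have : ∀ w' ∈ I.erase w, 6 * ∑ π : Equiv.Perm (Fin n),
                (if IsCrossing π (F w) ∧ IsCrossing π (F w') then 1 else 0) = K := by
              intro w' hw'
              rw [← Finset.card_filter]
              exact hpairc w hw w' (Finset.mem_of_mem_erase hw')
                (Finset.ne_of_mem_erase hw').symm
            rw [Finset.sum_congr rfl this, Finset.sum_const,
              Finset.card_erase_of_mem hw, hIcard, smul_eq_mul]
            congr 1)
      _ = (n - 3) * (2 * K + (n - 4) * K) := by
          rw [Finset.sum_const, hIcard, smul_eq_mul]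
  have hKpos : 0 < K := Fintype.card_pos
  have hK0 : (K:ℝ) ≠ 0 := by
    exact_mod_cast hKpos.ne'
  have hcast3 : ((n - 3 : ℕ) : ℝ) = (n:ℝ) - 3 := by
    rw [Nat.cast_sub (by omega)]
    norm_num
  have hcast4 : ((n - 4 : ℕ) : ℝ) = (n:ℝ) - 4 := by
    rw [Nat.cast_sub (by omega)]
    norm_num
  have hR1 : 3 * ((∑ π : Equiv.Perm (Fin n), crossingNumber (kite n) π : ℕ) : ℝ)
      = ((n:ℝ) - 3) * (K:ℝ) := by
    have := congrArg (Nat.cast : ℕ → ℝ) hS1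
    push_cast at this
    rw [hcast3] at this
    exact_mod_cast this
  have hR2 : 6 * ((∑ π : Equiv.Perm (Fin n),
      crossingNumber (kite n) π * crossingNumber (kite n) π : ℕ) : ℝ)
      = ((n:ℝ) - 3) * (2 * (K:ℝ) + ((n:ℝ) - 4) * (K:ℝ)) := by
    have := congrArg (Nat.cast : ℕ → ℝ) hS2
    push_cast at this
    rw [hcast3, hcast4] at this
    exact_mod_cast this
  have hmean : meanX (kite n) = ((n : ℝ) - 3) / 3 := by
    rw [meanX, expect]
    have hcast : ∑ π : Equiv.Perm (Fin n), (crossingNumber (kite n) π : ℝ)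
        = ((∑ π : Equiv.Perm (Fin n), crossingNumber (kite n) π : ℕ) : ℝ) := by
      rw [Nat.cast_sum]
    rw [hcast, ← hKdef, div_eq_div_iff hK0 (by norm_num : (3:ℝ) ≠ 0)]
    linarith [hR1]
  have hE2 : expect (fun π => (crossingNumber (kite n) π : ℝ) ^ 2)
      = ((n : ℝ) - 2) * ((n : ℝ) - 3) / 6 := by
    rw [expect]
    have hcast : ∑ π : Equiv.Perm (Fin n), (crossingNumber (kite n) π : ℝ) ^ 2
        = ((∑ π : Equiv.Perm (Fin n),
            crossingNumber (kite n) π * crossingNumber (kite n) π : ℕ) : ℝ) := by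
      rw [Nat.cast_sum]
      exact Finset.sum_congr rfl fun π _ => by push_cast; ring
    rw [hcast, ← hKdef, div_eq_div_iff hK0 (by norm_num : (6:ℝ) ≠ 0)]
    linear_combination hR2
  have hvar : varX (kite n) = (n : ℝ) * ((n : ℝ) - 3) / 18 := by
    rw [varX_eq, hE2, hmean]
    ring
  exact ⟨hmean, hE2, hvar⟩

end RandomCrossings
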